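/- Let X be a topological space, E ⊆ C(X) a vector sublattice, and K ⊆ X a compact set contained in supp E = ⋃_{g∈E} {x : g(x) ≠ 0}. Then there exists e ∈ E with e(x) ≥ 1 for all x ∈ K. -/

import Mathlib

/-- If `E` is a vector sublattice of `C(X)` and `K` is a compact subset of
`supp E = ⋃_{g ∈ E} {x : g x ≠ 0}`, then there is `e ∈ E` with `e ≥ 1` on `K`. -/
theorem stmt15 {X : Type*} [TopologicalSpace X] (E : Set C(X, ℝ))
    (h0 : (0 : C(X, ℝ)) ∈ E)
    (hadd : ∀ f g : C(X, ℝ), f ∈ E → g ∈ E → f + g ∈ E)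
    (hsmul : ∀ (c : ℝ) (f : C(X, ℝ)), f ∈ E → c • f ∈ E)
    (hsup : ∀ f g : C(X, ℝ), f ∈ E → g ∈ E → f ⊔ g ∈ E)
    (hinf : ∀ f g : C(X, ℝ), f ∈ E → g ∈ E → f ⊓ g ∈ E)
    (K : Set X) (hK : IsCompact K) (hKE : K ⊆ ⋃ g ∈ E, {x : X | g x ≠ 0}) :
    ∃ e ∈ E, ∀ x ∈ K, 1 ≤ e x := by
  classical
  -- choose for each point of K a function positive there
  have hchoice : ∀ p : K, ∃ g ∈ E, g (p : X) ≠ 0 := by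
    intro p
    simpa using hKE p.2
  choose g hgE hgx using hchoice
  set f : K → C(X, ℝ) := fun p => (g p) ⊔ ((-1 : ℝ) • g p) with hf
  have hfE : ∀ p, f p ∈ E := fun p => hsup _ _ (hgE p) (hsmul _ _ (hgE p))
  have hfval : ∀ p (y : X), f p y = |g p y| := by
    intro p y
    simp [hf, abs, max_comm]
  have hfpos : ∀ p, 0 < f p (p : X) := by
    intro p
    rw [hfval]
    exact abs_pos.mpr (hgx p)
  have hfnonneg : ∀ p (y : X), 0 ≤ f p y := by
    intro p y; rw [hfval]; exact abs_nonneg _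
  -- open cover
  set U : K → Set X := fun p => {y | f p (p : X) / 2 < f p y} with hU
  have hUopen : ∀ p, IsOpen (U p) := fun p =>
    isOpen_lt continuous_const (f p).continuous
  have hcover : K ⊆ ⋃ p, U p := by
    intro y hy
    exact Set.mem_iUnion.mpr ⟨⟨y, hy⟩, by
      simpa [hU] using half_lt_self (hfpos ⟨y, hy⟩)⟩
  obtain ⟨t, ht⟩ := hK.elim_finite_subcover U hUopen hcover
  refine ⟨∑ p ∈ t, (2 / f p (p : X)) • f p, ?_, ?_⟩
  · -- membership in E
    clear ht
    induction t using Finset.induction with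
    | empty => simpa using h0
    | insert _ _ hpt ih =>
      rw [Finset.sum_insert hpt]
      exact hadd _ _ (hsmul _ _ (hfE _)) ih
  · intro y hy
    obtain ⟨p, hpt, hpy⟩ := Set.mem_iUnion₂.mp (ht hy)
    have hpy' : f p (p : X) / 2 < f p y := hpy
    have hterm : (1 : ℝ) ≤ (2 / f p (p : X)) * f p y := by
      rw [div_mul_eq_mul_div, le_div_iff₀ (hfpos p), one_mul]
      linarith
    calc (1 : ℝ) ≤ (2 / f p (p : X)) * f p y := hterm
      _ ≤ ∑ q ∈ t, (2 / f q (q : X)) * f q y := by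
          refine Finset.single_le_sum (f := fun q => (2 / f q (q : X)) * f q y) (fun q _ => ?_) hpt
          exact mul_nonneg (div_nonneg (by norm_num) (hfpos q).le) (hfnonneg q y)
      _ = (∑ q ∈ t, (2 / f q (q : X)) • f q) y := by
          simp
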